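/- Let N ≥ 1 and equip ℝ^N with the ℓ¹-norm ‖·‖₁. Let w ∈ ℝ^N, δ > 0, and let C be the hypercube with vertices v_γ = w + δγ, γ ∈ {0,1}^N. Let f be a real-valued Lipschitz function (with respect to ‖·‖₁) defined on a set containing C. Then the interpolation function Λ(f,C) restricted to C is Lipschitz with Lip₁(Λ(f,C)|_C) ≤ Lip₁(f), where Lipschitz constants are taken with respect to ‖·‖₁. -/

import Mathlib

/-- The coordinatewise affine interpolation `Λ(f,C)` of `f` on the hypercube with
vertices `v_γ = w + δγ`, `γ ∈ {0,1}^N`. -/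
noncomputable def interpLam {N : ℕ} (w : Fin N → ℝ) (δ : ℝ) (f : (Fin N → ℝ) → ℝ)
    (x : Fin N → ℝ) : ℝ :=
  ∑ γ : Fin N → Bool,
    (∏ i, if γ i then (x i - w i) / δ else 1 - (x i - w i) / δ) *
      f (fun i => w i + if γ i then δ else 0)

open Finset

private noncomputable def ilq {N : ℕ} (w : Fin N → ℝ) (δ : ℝ) (x : Fin N → ℝ) (i : Fin N) (b : Bool) : ℝ :=
  if b then (x i - w i) / δ else 1 - (x i - w i) / δ

private noncomputable def ilv {N : ℕ} (w : Fin N → ℝ) (δ : ℝ) (γ : Fin N → Bool) : Fin N → ℝ :=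
  fun i => w i + if γ i then δ else 0

private lemma interpLam_eq {N : ℕ} (w : Fin N → ℝ) (δ : ℝ) (f : (Fin N → ℝ) → ℝ)
    (x : Fin N → ℝ) :
    interpLam w δ f x = ∑ γ : Fin N → Bool, (∏ i, ilq w δ x i (γ i)) * f (ilv w δ γ) := rfl

private lemma interp_split {N : ℕ} (w : Fin N → ℝ) (δ : ℝ) (f : (Fin N → ℝ) → ℝ)
    (j : Fin N) (x : Fin N → ℝ) :
    interpLam w δ f x
      = ∑ γ' : {i : Fin N // i ≠ j} → Bool,
          (∏ i : {i : Fin N // i ≠ j}, ilq w δ x i (γ' i)) *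
            (ilq w δ x j true *
                f (ilv w δ ((Equiv.piSplitAt j fun _ => Bool).symm (true, γ')))
             + ilq w δ x j false *
                f (ilv w δ ((Equiv.piSplitAt j fun _ => Bool).symm (false, γ')))) := by
  set e := Equiv.piSplitAt j (fun _ : Fin N => Bool) with he
  rw [interpLam_eq]
  rw [← Equiv.sum_comp e.symm
    (fun γ => (∏ i, ilq w δ x i (γ i)) * f (ilv w δ γ))]
  rw [Fintype.sum_prod_type_right]
  refine Finset.sum_congr rfl fun γ' _ => ?_
  have key : ∀ b : Bool,
      (∏ i, ilq w δ x i ((e.symm (b, γ')) i))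
        = ilq w δ x j b * ∏ i : {i : Fin N // i ≠ j}, ilq w δ x i (γ' i) := by
    intro b
    rw [← Finset.mul_prod_erase univ _ (mem_univ j)]
    congr 1
    · congr 1
      simp [he, Equiv.piSplitAt]
    · rw [Finset.prod_subtype (p := fun i => i ≠ j) (univ.erase j)
        (by intro i; simp [Finset.mem_erase]) (fun i => ilq w δ x i ((e.symm (b, γ')) i))]
      refine Finset.prod_congr rfl fun i _ => ?_
      congr 1
      simp [he, Equiv.piSplitAt, i.2]
  rw [Fintype.sum_bool, key true, key false]
  ring

private lemma interp_step {N : ℕ} (w : Fin N → ℝ) {δ : ℝ} (hδ : 0 < δ)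
    {D : Set (Fin N → ℝ)}
    (hCD : {x : Fin N → ℝ | ∀ i, x i ∈ Set.Icc (w i) (w i + δ)} ⊆ D)
    (f : (Fin N → ℝ) → ℝ) {L : ℝ}
    (hfLip : ∀ x ∈ D, ∀ y ∈ D, |f x - f y| ≤ L * ∑ i, |x i - y i|)
    (j : Fin N) (x y : Fin N → ℝ)
    (hx : ∀ i, x i ∈ Set.Icc (w i) (w i + δ))
    (hy : ∀ i, y i ∈ Set.Icc (w i) (w i + δ))
    (hxy : ∀ i, i ≠ j → x i = y i) :
    |interpLam w δ f x - interpLam w δ f y| ≤ L * |x j - y j| := by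
  set e := Equiv.piSplitAt j (fun _ : Fin N => Bool) with he
  set vt : ({i : Fin N // i ≠ j} → Bool) → (Fin N → ℝ) :=
    fun γ' => ilv w δ (e.symm (true, γ')) with hvt
  set vf : ({i : Fin N // i ≠ j} → Bool) → (Fin N → ℝ) :=
    fun γ' => ilv w δ (e.symm (false, γ')) with hvf
  set R : ({i : Fin N // i ≠ j} → Bool) → ℝ :=
    fun γ' => ∏ i : {i : Fin N // i ≠ j}, ilq w δ x i (γ' i) with hRdef
  have hvD : ∀ γ : Fin N → Bool, ilv w δ γ ∈ D := by
    intro γ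
    refine hCD fun i => ?_
    by_cases h : γ i <;> simp [ilv, h, hδ.le]
  have hRnn : ∀ γ', 0 ≤ R γ' := by
    intro γ'
    refine Finset.prod_nonneg fun i _ => ?_
    rcases hx i with ⟨h1, h2⟩
    cases hb : (γ' i) <;>
        simp only [ilq, hb, Bool.false_eq_true, if_true, if_false]
    · rw [sub_nonneg, div_le_one hδ]; linarith
    · exact div_nonneg (by linarith) hδ.le
  have hRsum : ∑ γ', R γ' = 1 := by
    rw [hRdef, ← Fintype.prod_sum (fun (i : {i : Fin N // i ≠ j}) b => ilq w δ x i b)]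
    refine Finset.prod_eq_one fun i _ => ?_
    rw [Fintype.sum_bool]
    simp only [ilq, Bool.false_eq_true, if_true, if_false]
    ring
  have hfd : ∀ γ', |f (vt γ') - f (vf γ')| ≤ L * δ := by
    intro γ'
    have h := hfLip _ (hvD (e.symm (true, γ'))) _ (hvD (e.symm (false, γ')))
    refine h.trans (le_of_eq ?_)
    congr 1
    rw [Finset.sum_eq_single j]
    · simp [ilv, he, Equiv.piSplitAt, abs_of_pos hδ]
    · intro i _ hij
      simp [ilv, he, Equiv.piSplitAt, hij]
    · simp
  have key : interpLam w δ f x - interpLam w δ f y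
      = ∑ γ', R γ' * (((x j - y j)/δ) * (f (vt γ') - f (vf γ'))) := by
    rw [interp_split w δ f j x, interp_split w δ f j y, ← Finset.sum_sub_distrib]
    refine Finset.sum_congr rfl fun γ' _ => ?_
    have hR : (∏ i : {i : Fin N // i ≠ j}, ilq w δ y i (γ' i)) = R γ' := by
      refine Finset.prod_congr rfl fun i _ => ?_
      simp [ilq, hxy i i.2]
    rw [hR]
    simp only [hRdef, ilq, Bool.false_eq_true, if_true, if_false, ← hvt, ← hvf]
    have hδ' : δ ≠ 0 := hδ.ne'
    field_simp
    ring
  rw [key]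
  calc |∑ γ', R γ' * (((x j - y j)/δ) * (f (vt γ') - f (vf γ')))|
      ≤ ∑ γ', |R γ' * (((x j - y j)/δ) * (f (vt γ') - f (vf γ')))| :=
        Finset.abs_sum_le_sum_abs _ _
    _ ≤ ∑ γ', R γ' * (|x j - y j|/δ * (L * δ)) := by
        refine Finset.sum_le_sum fun γ' _ => ?_
        rw [abs_mul, abs_mul, abs_of_nonneg (hRnn γ')]
        refine mul_le_mul_of_nonneg_left ?_ (hRnn γ')
        rw [abs_div, abs_of_pos hδ]
        exact mul_le_mul_of_nonneg_left (hfd γ') (by positivity)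
    _ = L * |x j - y j| := by
        rw [← Finset.sum_mul, hRsum, one_mul]
        field_simp

/-- With respect to the `ℓ¹`-norm on `ℝ^N`, the coordinatewise affine interpolation
does not increase the Lipschitz constant: `Lip₁(Λ(f,C)|_C) ≤ Lip₁(f)`. -/
theorem statement16 {N : ℕ} (hN : 1 ≤ N)
    (w : Fin N → ℝ) (δ : ℝ) (hδ : 0 < δ)
    (D : Set (Fin N → ℝ))
    (hCD : {x : Fin N → ℝ | ∀ i, x i ∈ Set.Icc (w i) (w i + δ)} ⊆ D)
    (f : (Fin N → ℝ) → ℝ)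
    (L : ℝ) (hL : 0 ≤ L)
    (hfLip : ∀ x ∈ D, ∀ y ∈ D, |f x - f y| ≤ L * ∑ i, |x i - y i|) :
    ∀ x ∈ {x : Fin N → ℝ | ∀ i, x i ∈ Set.Icc (w i) (w i + δ)},
      ∀ y ∈ {x : Fin N → ℝ | ∀ i, x i ∈ Set.Icc (w i) (w i + δ)},
        |interpLam w δ f x - interpLam w δ f y| ≤ L * ∑ i, |x i - y i| := by
  intro x hx y hy
  simp only [Set.mem_setOf_eq] at hx hy
  have main : ∀ k : ℕ, k ≤ N →
      |interpLam w δ f x - interpLam w δ f (fun i => if (i:ℕ) < k then y i else x i)|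
        ≤ L * ∑ i ∈ univ.filter (fun i : Fin N => (i:ℕ) < k), |x i - y i| := by
    intro k
    induction k with
    | zero => intro _; simp
    | succ k ih =>
      intro hk1
      have hk : k < N := hk1
      set j : Fin N := ⟨k, hk⟩ with hj
      set zk : Fin N → ℝ := fun i => if (i:ℕ) < k then y i else x i with hzkdef
      set zk1 : Fin N → ℝ := fun i => if (i:ℕ) < k+1 then y i else x i with hzk1def
      have hzk : ∀ i, zk i ∈ Set.Icc (w i) (w i + δ) := by
        intro i
        by_cases h : (i:ℕ) < k
        · simp only [hzkdef, if_pos h]; exact hy i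
        · simp only [hzkdef, if_neg h]; exact hx i
      have hzk1 : ∀ i, zk1 i ∈ Set.Icc (w i) (w i + δ) := by
        intro i
        by_cases h : (i:ℕ) < k+1
        · simp only [hzk1def, if_pos h]; exact hy i
        · simp only [hzk1def, if_neg h]; exact hx i
      have hdiff : ∀ i, i ≠ j → zk i = zk1 i := by
        intro i hij
        have hik : (i:ℕ) ≠ k := fun h => hij (Fin.ext h)
        by_cases h : (i:ℕ) < k
        · simp only [hzkdef, hzk1def, if_pos h, if_pos (by omega : (i:ℕ) < k+1)]
        · simp only [hzkdef, hzk1def, if_neg h, if_neg (by omega : ¬ (i:ℕ) < k+1)]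
      have hstep := interp_step w hδ hCD f hfLip j zk zk1 hzk hzk1 hdiff
      have hj1 : zk j = x j := by
        simp only [hzkdef, hj, if_neg (lt_irrefl k)]
      have hj2 : zk1 j = y j := by
        simp only [hzk1def, hj]
        rw [if_pos]
        exact Nat.lt_succ_self k
      have hfil : univ.filter (fun i : Fin N => (i:ℕ) < k+1)
          = insert j (univ.filter (fun i : Fin N => (i:ℕ) < k)) := by
        ext i
        simp only [Finset.mem_filter, Finset.mem_insert, Finset.mem_univ, true_and,
          Fin.ext_iff, hj]
        omega
      calc |interpLam w δ f x - interpLam w δ f zk1|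
          ≤ |interpLam w δ f x - interpLam w δ f zk|
              + |interpLam w δ f zk - interpLam w δ f zk1| := abs_sub_le _ _ _
        _ ≤ L * ∑ i ∈ univ.filter (fun i : Fin N => (i:ℕ) < k), |x i - y i|
              + L * |zk j - zk1 j| := add_le_add (ih hk.le) hstep
        _ = L * ∑ i ∈ univ.filter (fun i : Fin N => (i:ℕ) < k+1), |x i - y i| := by
            rw [hfil, Finset.sum_insert (by simp [hj]), hj1, hj2]
            ring
  have hmain := main N le_rfl
  have hz : (fun i : Fin N => if (i:ℕ) < N then y i else x i) = y :=
    funext fun i => if_pos i.isLt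
  have hfil : univ.filter (fun i : Fin N => (i:ℕ) < N) = univ :=
    Finset.filter_true_of_mem fun i _ => i.isLt
  rw [hz, hfil] at hmain
  exact hmain
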